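/- Let σ ∈ C²([z_min, z_max]) with σ(z_min) = σ(z_max) = 0, and let h ∈ C²([z_min, z_max]) be arbitrary. Then ∫_{z_min}^{z_max} (σ²/2)·h·h'' dz + 2∫ σσ'·h·h' dz ≤ c∫ h² dz - ∫ (σ²/2)(h')² dz, where c = (1/2)·sup |σσ'' + (σ')²|. In particular the left-hand side is bounded above by c∫ h² dz. -/

import Mathlib

open intervalIntegral in
/-- The key integration-by-parts estimate for the diffusion terms: with `σ`
vanishing at both endpoints,
`∫ (σ²/2) h h'' + 2∫ σσ' h h' ≤ c ∫ h² - ∫ (σ²/2)(h')²` where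
`c = ½ sup |σσ'' + (σ')²|`; in particular the left-hand side is `≤ c ∫ h²`. -/
theorem statement17 (zmin zmax : ℝ) (hz : zmin ≤ zmax)
    (σ h : ℝ → ℝ) (hσ : ContDiff ℝ 2 σ) (hh : ContDiff ℝ 2 h)
    (hσmin : σ zmin = 0) (hσmax : σ zmax = 0) :
    ((∫ z in zmin..zmax, (σ z ^ 2 / 2) * h z * deriv (deriv h) z)
        + 2 * (∫ z in zmin..zmax, σ z * deriv σ z * h z * deriv h z)
      ≤ (1 / 2) * sSup ((fun z => |σ z * deriv (deriv σ) z + (deriv σ z) ^ 2|) ''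
            Set.Icc zmin zmax) * (∫ z in zmin..zmax, (h z) ^ 2)
        - (∫ z in zmin..zmax, (σ z ^ 2 / 2) * (deriv h z) ^ 2)) ∧
    ((∫ z in zmin..zmax, (σ z ^ 2 / 2) * h z * deriv (deriv h) z)
        + 2 * (∫ z in zmin..zmax, σ z * deriv σ z * h z * deriv h z)
      ≤ (1 / 2) * sSup ((fun z => |σ z * deriv (deriv σ) z + (deriv σ z) ^ 2|) ''
            Set.Icc zmin zmax) * (∫ z in zmin..zmax, (h z) ^ 2)) := by
  -- regularity facts
  have hσd1 : ContDiff ℝ 1 (deriv σ) :=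
    ((contDiff_succ_iff_deriv (n := 1)).mp (by exact_mod_cast hσ)).2.2
  have hhd1 : ContDiff ℝ 1 (deriv h) :=
    ((contDiff_succ_iff_deriv (n := 1)).mp (by exact_mod_cast hh)).2.2
  have hσdiff : Differentiable ℝ σ := hσ.differentiable two_ne_zero
  have hhdiff : Differentiable ℝ h := hh.differentiable two_ne_zero
  have hσddiff : Differentiable ℝ (deriv σ) := hσd1.differentiable one_ne_zero
  have hhddiff : Differentiable ℝ (deriv h) := hhd1.differentiable one_ne_zero
  have cσ : Continuous σ := hσ.continuous
  have ch : Continuous h := hh.continuous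
  have cσd : Continuous (deriv σ) := hσd1.continuous
  have chd : Continuous (deriv h) := hhd1.continuous
  have cσdd : Continuous (deriv (deriv σ)) := hσd1.continuous_deriv le_rfl
  have chdd : Continuous (deriv (deriv h)) := hhd1.continuous_deriv le_rfl
  have i1 : IntervalIntegrable
      (fun z => σ z * deriv σ z * h z + σ z ^ 2 / 2 * deriv h z)
      MeasureTheory.volume zmin zmax := by
    exact Continuous.intervalIntegrable (by fun_prop) _ _
  have i2 : IntervalIntegrable (deriv (deriv h)) MeasureTheory.volume zmin zmax := by
    exact Continuous.intervalIntegrable (by fun_prop) _ _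
  have i3 : IntervalIntegrable
      (fun z => deriv σ z * deriv σ z + σ z * deriv (deriv σ) z)
      MeasureTheory.volume zmin zmax := by
    exact Continuous.intervalIntegrable (by fun_prop) _ _
  have i4 : IntervalIntegrable (fun z => h z * deriv h z)
      MeasureTheory.volume zmin zmax := by
    exact Continuous.intervalIntegrable (by fun_prop) _ _
  have i5 : IntervalIntegrable (fun z => (σ z * deriv σ z) * (h z * deriv h z))
      MeasureTheory.volume zmin zmax := by
    exact Continuous.intervalIntegrable (by fun_prop) _ _
  have i6 : IntervalIntegrable (fun z => (σ z ^ 2 / 2) * (deriv h z) ^ 2)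
      MeasureTheory.volume zmin zmax := by
    exact Continuous.intervalIntegrable (by fun_prop) _ _
  -- first integration by parts: u = σ²/2 * h, v = deriv h
  have ibp1 : (∫ z in zmin..zmax, (σ z ^ 2 / 2 * h z) * deriv (deriv h) z)
      = - ∫ z in zmin..zmax,
          (σ z * deriv σ z * h z + σ z ^ 2 / 2 * deriv h z) * deriv h z := by
    have := intervalIntegral.integral_mul_deriv_eq_deriv_mul
      (u := fun z => σ z ^ 2 / 2 * h z)
      (u' := fun z => σ z * deriv σ z * h z + σ z ^ 2 / 2 * deriv h z)
      (v := deriv h) (v' := deriv (deriv h)) (a := zmin) (b := zmax)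
      (fun x _ => by
        have h1 : HasDerivAt (fun z => σ z ^ 2 / 2) (σ x * deriv σ x) x := by
          have := ((hσdiff x).hasDerivAt.pow 2).div_const 2
          simpa [pow_one, mul_comm, mul_assoc, mul_div_assoc] using this
        exact h1.mul (hhdiff x).hasDerivAt)
      (fun x _ => (hhddiff x).hasDerivAt) i1 i2
    rw [this]
    simp only [hσmin, hσmax]
    ring
  -- second integration by parts: u = σ σ', v = h²/2
  have ibp2 : (∫ z in zmin..zmax, (σ z * deriv σ z) * (h z * deriv h z))
      = - ∫ z in zmin..zmax,
          (deriv σ z * deriv σ z + σ z * deriv (deriv σ) z) * (h z ^ 2 / 2) := by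
    have := intervalIntegral.integral_mul_deriv_eq_deriv_mul
      (u := fun z => σ z * deriv σ z)
      (u' := fun z => deriv σ z * deriv σ z + σ z * deriv (deriv σ) z)
      (v := fun z => h z ^ 2 / 2) (v' := fun z => h z * deriv h z)
      (a := zmin) (b := zmax)
      (fun x _ => (hσdiff x).hasDerivAt.mul (hσddiff x).hasDerivAt)
      (fun x _ => by
        have := ((hhdiff x).hasDerivAt.pow 2).div_const 2
        simpa [pow_one, mul_comm, mul_assoc, mul_div_assoc] using this) i3 i4
    rw [this]
    simp only [hσmin, hσmax]
    ring
  set c : ℝ := (1 / 2) * sSup ((fun z => |σ z * deriv (deriv σ) z + (deriv σ z) ^ 2|) ''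
      Set.Icc zmin zmax) with hc
  have split : (∫ z in zmin..zmax,
        (σ z * deriv σ z * h z + σ z ^ 2 / 2 * deriv h z) * deriv h z)
      = (∫ z in zmin..zmax, (σ z * deriv σ z) * (h z * deriv h z))
        + (∫ z in zmin..zmax, (σ z ^ 2 / 2) * (deriv h z) ^ 2) := by
    rw [← intervalIntegral.integral_add i5 i6]
    congr 1; funext z; ring
  -- the combined identity
  have key : (∫ z in zmin..zmax, (σ z ^ 2 / 2) * h z * deriv (deriv h) z)
      + 2 * (∫ z in zmin..zmax, σ z * deriv σ z * h z * deriv h z)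
      = (∫ z in zmin..zmax,
          -((σ z * deriv (deriv σ) z + (deriv σ z) ^ 2) / 2) * h z ^ 2)
        - (∫ z in zmin..zmax, (σ z ^ 2 / 2) * (deriv h z) ^ 2) := by
    have e2 : (∫ z in zmin..zmax, σ z * deriv σ z * h z * deriv h z)
        = ∫ z in zmin..zmax, (σ z * deriv σ z) * (h z * deriv h z) := by
      congr 1; funext z; ring
    have e3 : (∫ z in zmin..zmax,
        -((σ z * deriv (deriv σ) z + (deriv σ z) ^ 2) / 2) * h z ^ 2)
        = - ∫ z in zmin..zmax,
          (deriv σ z * deriv σ z + σ z * deriv (deriv σ) z) * (h z ^ 2 / 2) := by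
      rw [← intervalIntegral.integral_neg]
      congr 1; funext z; ring
    rw [e2, e3, ibp1, split, ← ibp2]
    ring
  -- bound the first integral
  have hbdd : BddAbove ((fun z => |σ z * deriv (deriv σ) z + (deriv σ z) ^ 2|) ''
      Set.Icc zmin zmax) :=
    (isCompact_Icc.image_of_continuousOn (by fun_prop)).bddAbove
  have hbound : (∫ z in zmin..zmax,
        -((σ z * deriv (deriv σ) z + (deriv σ z) ^ 2) / 2) * h z ^ 2)
      ≤ c * (∫ z in zmin..zmax, (h z) ^ 2) := by
    rw [← intervalIntegral.integral_const_mul]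
    apply intervalIntegral.integral_mono_on hz
      (Continuous.intervalIntegrable (by fun_prop) _ _)
      (Continuous.intervalIntegrable (by fun_prop) _ _)
    intro x hx
    have h1 : |σ x * deriv (deriv σ) x + (deriv σ x) ^ 2|
        ≤ sSup ((fun z => |σ z * deriv (deriv σ) z + (deriv σ z) ^ 2|) ''
          Set.Icc zmin zmax) :=
      le_csSup hbdd ⟨x, hx, rfl⟩
    have h2 : -((σ x * deriv (deriv σ) x + (deriv σ x) ^ 2) / 2) ≤ c := by
      rw [hc]
      have := neg_abs_le (σ x * deriv (deriv σ) x + (deriv σ x) ^ 2)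
      nlinarith
    nlinarith [sq_nonneg (h x)]
  have hnonneg : (0 : ℝ) ≤ ∫ z in zmin..zmax, (σ z ^ 2 / 2) * (deriv h z) ^ 2 :=
    intervalIntegral.integral_nonneg hz (fun x _ => by positivity)
  constructor
  · rw [key]
    linarith
  · rw [key]
    linarith
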